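/- For any integer n ≥ 2, the sum over k = 1,…,n-1 of cot²(πk/n) equals n²/3 + 2/3 - n. -/

import Mathlib

open Real Finset
open Complex

noncomputable def ζ (n j : ℕ) : ℂ := Complex.exp (2 * Real.pi * Complex.I * j / n)
noncomputable def u (n k : ℕ) : ℂ := ∑ j ∈ range n, (j : ℂ) * ζ n k ^ j

lemma myGeom (n : ℕ) (z : ℂ) (h1 : z ≠ 1) (hz : z ^ n = 1) :
    ∑ j ∈ range n, z ^ j = 0 := by
  rw [geom_sum_eq h1, hz, sub_self, zero_div]

lemma myKey (n : ℕ) (z : ℂ) :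
    (z - 1) * ∑ j ∈ range n, (j : ℂ) * z ^ j
      = n * z ^ n - z ^ n + 1 - ∑ j ∈ range n, z ^ j := by
  induction n with
  | zero => simp
  | succ m ih =>
    rw [sum_range_succ, sum_range_succ]
    push_cast
    ring_nf
    ring_nf at ih
    linear_combination ih

lemma gaussC (n : ℕ) : (∑ j ∈ range n, (j : ℂ)) * 2 = n * (n - 1) := by
  induction n with
  | zero => simp
  | succ m ih =>
    rw [sum_range_succ]
    push_cast
    linear_combination ih

lemma sqC (n : ℕ) : (∑ j ∈ range n, (j : ℂ) ^ 2) * 6 = n * (n - 1) * (2 * n - 1) := by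
  induction n with
  | zero => simp
  | succ m ih =>
    rw [sum_range_succ]
    push_cast
    linear_combination ih

lemma zeta_pow (n j : ℕ) (hn : n ≠ 0) : ζ n j ^ n = 1 := by
  have hn' : (n : ℂ) ≠ 0 := Nat.cast_ne_zero.mpr hn
  rw [ζ, ← Complex.exp_nat_mul]
  have : (n : ℂ) * (2 * Real.pi * Complex.I * j / n) = (j : ℤ) * (2 * Real.pi * Complex.I) := by
    field_simp
    simp
  rw [this, Complex.exp_int_mul_two_pi_mul_I]

lemma zeta_eq_one_iff (n j : ℕ) (hn : n ≠ 0) : ζ n j = 1 ↔ n ∣ j := by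
  have hπ : (Real.pi : ℂ) ≠ 0 := by simpa using Real.pi_ne_zero
  have hn' : (n : ℂ) ≠ 0 := Nat.cast_ne_zero.mpr hn
  have h2πI : (2 * (Real.pi : ℂ) * Complex.I) ≠ 0 :=
    mul_ne_zero (mul_ne_zero (by norm_num) hπ) Complex.I_ne_zero
  rw [ζ, Complex.exp_eq_one_iff]
  constructor
  · rintro ⟨m, hm⟩
    field_simp at hm
    have hj : (j : ℂ) = ((m * n : ℤ) : ℂ) := by
      apply mul_left_cancel₀ h2πI
      push_cast
      linear_combination (2 * (Real.pi : ℂ) * Complex.I) * hm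
    have hj' : (j : ℤ) = m * n := by exact_mod_cast hj
    have : (n : ℤ) ∣ (j : ℤ) := ⟨m, by linarith⟩
    exact_mod_cast this
  · rintro ⟨m, rfl⟩
    refine ⟨m, ?_⟩
    field_simp
    simp

lemma zeta_pow_eq (n k j : ℕ) : ζ n k ^ j = ζ n (k * j) := by
  rw [ζ, ζ, ← Complex.exp_nat_mul]
  congr 1
  push_cast
  ring

lemma Tsum (n j : ℕ) (hn : n ≠ 0) :
    ∑ k ∈ Finset.Ico 1 n, ζ n k ^ j = (if n ∣ j then (n : ℂ) else 0) - 1 := by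
  have h0 : ∑ k ∈ Finset.range n, ζ n j ^ k = (if n ∣ j then (n : ℂ) else 0) := by
    by_cases h : n ∣ j
    · rw [if_pos h, (zeta_eq_one_iff n j hn).mpr h]
      simp
    · rw [if_neg h, myGeom n _ (fun h1 => h ((zeta_eq_one_iff n j hn).mp h1)) (zeta_pow n j hn)]
  have h1 : ∑ k ∈ Finset.Ico 1 n, ζ n k ^ j = ∑ k ∈ Finset.range n, ζ n j ^ k - 1 := by
    have hsplit : ∑ k ∈ Finset.Ico 0 n, ζ n j ^ k
        = ζ n j ^ 0 + ∑ k ∈ Finset.Ico 1 n, ζ n j ^ k :=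
      Finset.sum_eq_sum_Ico_succ_bot (Nat.pos_of_ne_zero hn) _
    rw [Finset.range_eq_Ico, hsplit, pow_zero]
    have : ∀ k ∈ Finset.Ico 1 n, ζ n k ^ j = ζ n j ^ k := by
      intro k _
      rw [zeta_pow_eq, zeta_pow_eq, Nat.mul_comm]
    rw [Finset.sum_congr rfl this]
    ring
  rw [h1, h0]

lemma u_mul (n k : ℕ) (hn : n ≠ 0) (hk1 : 1 ≤ k) (hkn : k < n) :
    (ζ n k - 1) * u n k = n := by
  have hz1 : ζ n k ≠ 1 := by
    rw [Ne, zeta_eq_one_iff n k hn]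
    intro h
    exact absurd (Nat.le_of_dvd hk1 h) (by omega)
  rw [u, myKey, zeta_pow n k hn, myGeom n _ hz1 (zeta_pow n k hn)]
  ring

lemma cot_sq_eq (n k : ℕ) (hn : n ≠ 0) (hk1 : 1 ≤ k) (hkn : k < n) :
    ((Real.cot (Real.pi * k / n) : ℂ)) ^ 2 = -(((n : ℂ) + 2 * u n k) / n) ^ 2 := by
  have hn' : (n : ℂ) ≠ 0 := Nat.cast_ne_zero.mpr hn
  have hz1 : ζ n k ≠ 1 := by
    rw [Ne, zeta_eq_one_iff n k hn]
    intro h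
    exact absurd (Nat.le_of_dvd hk1 h) (by omega)
  have hz1' : 1 - ζ n k ≠ 0 := fun h => hz1 (by linear_combination -h)
  have hu := u_mul n k hn hk1 hkn
  have hcast : ((Real.cot (Real.pi * k / n) : ℂ)) = Complex.cot ((Real.pi : ℂ) * (k / n)) := by
    rw [Complex.ofReal_cot]
    congr 1
    push_cast
    ring
  rw [hcast, Complex.cot_pi_eq_exp_ratio]
  have hE : Complex.exp (2 * (Real.pi : ℂ) * Complex.I * ((k : ℂ) / n)) = ζ n k := by
    rw [ζ]; congr 1; ring
  rw [hE]
  have hzm : ζ n k - 1 ≠ 0 := sub_ne_zero.mpr hz1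
  have step1 : (ζ n k + 1) / (Complex.I * (1 - ζ n k))
      = Complex.I * ((ζ n k + 1) / (ζ n k - 1)) := by
    rw [mul_div_assoc'] at *
    rw [div_eq_div_iff (mul_ne_zero Complex.I_ne_zero hz1') hzm]
    linear_combination (ζ n k + 1) * (ζ n k - 1) * Complex.I_sq
  have step2 : (ζ n k + 1) / (ζ n k - 1) = ((n : ℂ) + 2 * u n k) / n := by
    rw [div_eq_div_iff hzm hn']
    linear_combination (-2) * hu
  rw [step1, step2, mul_pow, Complex.I_sq]
  ring

lemma sum_u_val (n : ℕ) (hn : n ≠ 0) :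
    (∑ k ∈ Finset.Ico 1 n, u n k) * 2 = -((n : ℂ) * (n - 1)) := by
  have h1 : ∑ k ∈ Finset.Ico 1 n, u n k
      = ∑ j ∈ range n, ((j : ℂ) * ((if n ∣ j then (n : ℂ) else 0) - 1)) := by
    unfold u
    rw [Finset.sum_comm]
    exact Finset.sum_congr rfl fun j _ => by rw [← Finset.mul_sum, Tsum n j hn]
  have h2 : ∀ j ∈ range n, (j : ℂ) * ((if n ∣ j then (n : ℂ) else 0) - 1) = -(j : ℂ) := by
    intro j hj
    rcases Nat.eq_zero_or_pos j with rfl | hj0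
    · simp
    · rw [if_neg fun h => absurd (Nat.le_of_dvd hj0 h) (by simp at hj; omega)]
      ring
  rw [h1, Finset.sum_congr rfl h2, Finset.sum_neg_distrib, neg_mul, gaussC]

lemma inner_val (n j : ℕ) (hn : n ≠ 0) (hj : j < n) :
    ∑ i ∈ range n, (j : ℂ) * (i : ℂ) * (if n ∣ (j + i) then (n : ℂ) else 0)
      = (j : ℂ) * ((n : ℂ) - j) * n := by
  rcases Nat.eq_zero_or_pos j with rfl | hj0
  · simp
  · rw [Finset.sum_eq_single_of_mem (n - j)]
    · rw [show j + (n - j) = n by omega, if_pos dvd_rfl]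
      have : ((n - j : ℕ) : ℂ) = (n : ℂ) - j := by
        push_cast [Nat.cast_sub hj.le]
        ring
      rw [this]
    · exact Finset.mem_range.mpr (by omega)
    · intro i hi' hi
      have hi2 := Finset.mem_range.mp hi'
      rw [if_neg, mul_zero]
      rintro ⟨m, hm⟩
      have h2 : n * m < n * 2 := by omega
      have h3 : m < 2 := Nat.lt_of_mul_lt_mul_left h2
      have h0 : m ≠ 0 := by rintro rfl; omega
      have hm1 : m = 1 := by omega
      subst hm1
      omega

lemma sum_u_sq_val (n : ℕ) (hn : n ≠ 0) :
    (∑ k ∈ Finset.Ico 1 n, (u n k) ^ 2) * 12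
      = (n : ℂ) ^ 2 * ((n : ℂ) - 1) * ((n : ℂ) + 1) * 2 - (n : ℂ) ^ 2 * ((n : ℂ) - 1) ^ 2 * 3 := by
  have hexp : ∀ k, (u n k) ^ 2
      = ∑ j ∈ range n, ∑ i ∈ range n, (j : ℂ) * (i : ℂ) * ζ n k ^ (j + i) := by
    intro k
    rw [u, sq, Finset.sum_mul_sum]
    exact Finset.sum_congr rfl fun j _ => Finset.sum_congr rfl fun i _ => by
      rw [pow_add]; ring
  have h1 : ∑ k ∈ Finset.Ico 1 n, (u n k) ^ 2
      = ∑ j ∈ range n, ∑ i ∈ range n, (j : ℂ) * (i : ℂ)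
          * ((if n ∣ (j + i) then (n : ℂ) else 0) - 1) := by
    rw [Finset.sum_congr rfl fun k _ => hexp k, Finset.sum_comm]
    refine Finset.sum_congr rfl fun j _ => ?_
    rw [Finset.sum_comm]
    refine Finset.sum_congr rfl fun i _ => ?_
    rw [← Finset.mul_sum, Tsum n (j + i) hn]
  have h2 : ∀ j ∈ range n, ∑ i ∈ range n, (j : ℂ) * (i : ℂ)
        * ((if n ∣ (j + i) then (n : ℂ) else 0) - 1)
      = (j : ℂ) * ((n : ℂ) - j) * n - (j : ℂ) * (∑ i ∈ range n, (i : ℂ)) := by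
    intro j hj
    have : ∀ i ∈ range n, (j : ℂ) * (i : ℂ) * ((if n ∣ (j + i) then (n : ℂ) else 0) - 1)
        = (j : ℂ) * (i : ℂ) * (if n ∣ (j + i) then (n : ℂ) else 0) - (j : ℂ) * (i : ℂ) := by
      intro i _; ring
    rw [Finset.sum_congr rfl this, Finset.sum_sub_distrib,
      inner_val n j hn (Finset.mem_range.mp hj), ← Finset.mul_sum]
  rw [h1, Finset.sum_congr rfl h2, Finset.sum_sub_distrib]
  have h3 : ∑ j ∈ range n, (j : ℂ) * ((n : ℂ) - j) * n
      = (n : ℂ) ^ 2 * (∑ j ∈ range n, (j : ℂ)) - (n : ℂ) * (∑ j ∈ range n, (j : ℂ) ^ 2) := by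
    rw [Finset.mul_sum, Finset.mul_sum, ← Finset.sum_sub_distrib]
    exact Finset.sum_congr rfl fun j _ => by ring
  have h4 : ∑ j ∈ range n, ((j : ℂ) * (∑ i ∈ range n, (i : ℂ)))
      = (∑ j ∈ range n, (j : ℂ)) * (∑ j ∈ range n, (j : ℂ)) := (Finset.sum_mul ..).symm
  rw [h3, h4]
  linear_combination (6 * (n : ℂ) ^ 2 - 6 * (∑ j ∈ range n, (j : ℂ))
      - 3 * (n : ℂ) * ((n : ℂ) - 1)) * gaussC n + (-2 * (n : ℂ)) * sqC n

set_option maxHeartbeats 1000000 in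
/-- For any integer `n ≥ 2`,
`∑_{k=1}^{n-1} cot²(πk/n) = n²/3 + 2/3 - n`. -/
theorem sum_cot_sq (n : ℕ) (hn : 2 ≤ n) :
    ∑ k ∈ Finset.Ico 1 n, (Real.cot (Real.pi * k / n)) ^ 2
      = (n : ℝ) ^ 2 / 3 + 2 / 3 - (n : ℝ) := by
  have hn0 : n ≠ 0 := by omega
  have hn' : (n : ℂ) ≠ 0 := Nat.cast_ne_zero.mpr hn0
  have key : ∑ k ∈ Finset.Ico 1 n, ((Real.cot (Real.pi * k / n) : ℂ)) ^ 2
      = (n : ℂ) ^ 2 / 3 + 2 / 3 - (n : ℂ) := by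
    have hterm : ∀ k ∈ Finset.Ico 1 n, ((Real.cot (Real.pi * k / n) : ℂ)) ^ 2
        = -1 - (4 / (n : ℂ)) * u n k - (4 / (n : ℂ) ^ 2) * (u n k) ^ 2 := by
      intro k hk
      rw [Finset.mem_Ico] at hk
      rw [cot_sq_eq n k hn0 hk.1 hk.2]
      field_simp
      ring
    rw [Finset.sum_congr rfl hterm]
    have e1 : ∑ k ∈ Finset.Ico 1 n,
        ((-1 : ℂ) - (4 / (n : ℂ)) * u n k - (4 / (n : ℂ) ^ 2) * (u n k) ^ 2)
        = (∑ _k ∈ Finset.Ico 1 n, (-1 : ℂ))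
          - (4 / (n : ℂ)) * (∑ k ∈ Finset.Ico 1 n, u n k)
          - (4 / (n : ℂ) ^ 2) * (∑ k ∈ Finset.Ico 1 n, (u n k) ^ 2) := by
      rw [Finset.sum_sub_distrib, Finset.sum_sub_distrib, Finset.mul_sum, Finset.mul_sum]
    rw [e1]
    have e2 : (∑ _k ∈ Finset.Ico 1 n, (-1 : ℂ)) = -((n : ℂ) - 1) := by
      rw [Finset.sum_const, Nat.card_Ico]
      have : ((n - 1 : ℕ) : ℂ) = (n : ℂ) - 1 := by
        push_cast [Nat.cast_sub (by omega : 1 ≤ n)]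
        ring
      rw [nsmul_eq_mul, this]
      ring
    rw [e2]
    have hsu := sum_u_val n hn0
    have hsq := sum_u_sq_val n hn0
    field_simp
    linear_combination (-6 * (n : ℂ)) * hsu + (-1 : ℂ) * hsq
  refine Complex.ofReal_inj.mp ?_
  push_cast at key ⊢
  exact key
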